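/- Let p be a prime, k ≥ 1, and let P ∈ 𝔽_p[t_1,…,t_k] be a product of N affine-linear polynomials (degree ≤ 1 polynomials) with N < (k+1)(p-1). Then ∑_{t ∈ 𝔽_p^k} P(t) = (-1)^k · c, where c is the coefficient of t_1^{p-1} ⋯ t_k^{p-1} in P. -/

import Mathlib

open Finset MvPolynomial

lemma sum_pow_zmod (p : ℕ) [Fact p.Prime] (n : ℕ) :
    ∑ x : ZMod p, x ^ n = if n ≠ 0 ∧ (p - 1) ∣ n then -1 else 0 := by
  classical
  rcases eq_or_ne n 0 with rfl | hn
  · simp [ZMod.natCast_self, Finset.card_univ, ZMod.card,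
      (show ((p : ℕ) : ZMod p) = 0 from ZMod.natCast_self p)]
  · have h0 : ∑ x : ZMod p, x ^ n = ∑ x ∈ Finset.univ \ {(0 : ZMod p)}, x ^ n := by
      rw [← Finset.sum_sdiff (Finset.subset_univ {(0 : ZMod p)}), Finset.sum_singleton,
        zero_pow hn, add_zero]
    let φ : (ZMod p)ˣ ↪ ZMod p := ⟨fun x ↦ x, fun _ _ => Units.ext⟩
    have hmap : Finset.univ.map φ = Finset.univ \ {(0 : ZMod p)} := by
      ext x
      simp only [Finset.mem_map, Finset.mem_univ, Function.Embedding.coeFn_mk, true_and,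
        Finset.mem_sdiff, Finset.mem_singleton, φ, IsUnit, ne_eq]
      exact isUnit_iff_ne_zero
    have h1 : ∑ x ∈ Finset.univ \ {(0 : ZMod p)}, x ^ n = ∑ x : (ZMod p)ˣ, (x : ZMod p) ^ n := by
      rw [← hmap, Finset.sum_map]
      rfl
    rw [h0, h1, FiniteField.sum_pow_units (ZMod p) n, ZMod.card]
    simp [hn]

theorem sum_eval_prod_linear (p k N : ℕ) [Fact p.Prime] (hk : 1 ≤ k)
    (hN : N < (k + 1) * (p - 1))
    (L : Fin N → MvPolynomial (Fin k) (ZMod p))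
    (hL : ∀ j, (L j).totalDegree ≤ 1) :
    ∑ t : Fin k → ZMod p, MvPolynomial.eval t (∏ j, L j) =
      (-1 : ZMod p) ^ k *
        MvPolynomial.coeff (Finsupp.equivFunOnFinite.symm fun _ : Fin k => p - 1)
          (∏ j, L j) := by
  classical
  set P := ∏ j, L j with hP
  set m0 : Fin k →₀ ℕ := Finsupp.equivFunOnFinite.symm fun _ : Fin k => p - 1 with hm0
  have hm0i : ∀ i, m0 i = p - 1 := fun i => rfl
  have hp2 : 2 ≤ p := (Fact.out (p := p.Prime)).two_le
  have hp1 : 1 ≤ p - 1 := by omega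
  have hdeg : P.totalDegree ≤ N := by
    calc P.totalDegree ≤ ∑ j, (L j).totalDegree := MvPolynomial.totalDegree_finset_prod _ _
      _ ≤ ∑ _j : Fin N, 1 := Finset.sum_le_sum fun j _ => hL j
      _ = N := by simp
  -- rewrite sum of evaluations
  have step1 : ∑ t : Fin k → ZMod p, MvPolynomial.eval t P =
      ∑ d ∈ P.support, MvPolynomial.coeff d P * ∏ i, ∑ x : ZMod p, x ^ d i := by
    simp_rw [MvPolynomial.eval_eq']
    rw [Finset.sum_comm]
    refine Finset.sum_congr rfl fun d _ => ?_
    rw [← Finset.mul_sum, ← Fintype.prod_sum fun i (x : ZMod p) => x ^ d i]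
  rw [step1]
  have key : ∀ d ∈ P.support,
      MvPolynomial.coeff d P * ∏ i, ∑ x : ZMod p, x ^ d i =
        if d = m0 then MvPolynomial.coeff d P * (-1 : ZMod p) ^ k else 0 := by
    intro d hd
    simp_rw [sum_pow_zmod]
    by_cases h : ∀ i, d i ≠ 0 ∧ (p - 1) ∣ d i
    · have hdm : d = m0 := by
        have hsum : ∑ i, d i ≤ N := by
          have := MvPolynomial.le_totalDegree (p := P) hd
          calc ∑ i, d i = d.sum fun _ e => e := by
                rw [Finsupp.sum_fintype]; intro; rfl
            _ ≤ P.totalDegree := this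
            _ ≤ N := hdeg
        have hge : ∀ i, p - 1 ≤ d i := fun i =>
          Nat.le_of_dvd (Nat.pos_of_ne_zero (h i).1) (h i).2
        ext i
        rw [hm0i]
        by_contra hne
        -- then d i ≥ 2*(p-1)
        obtain ⟨c, hc⟩ := (h i).2
        have hc2 : 2 ≤ c := by
          rcases c with _ | _ | c
          · simp at hc; exact absurd hc (h i).1
          · omega
          · omega
        have hdi : 2 * (p - 1) ≤ d i := by
          rw [hc]; calc 2 * (p-1) = (p-1) * 2 := by ring
            _ ≤ (p-1) * c := Nat.mul_le_mul_left _ hc2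
        have hbig : (k + 1) * (p - 1) ≤ ∑ j, d j := by
          have : ∑ j, d j = d i + ∑ j ∈ Finset.univ.erase i, d j := by
            rw [Finset.add_sum_erase _ _ (Finset.mem_univ i)]
          rw [this]
          have h2 : (k - 1) * (p - 1) ≤ ∑ j ∈ Finset.univ.erase i, d j := by
            calc (k - 1) * (p - 1) = ∑ _j ∈ Finset.univ.erase i, (p - 1) := by
                  rw [Finset.sum_const, Finset.card_erase_of_mem (Finset.mem_univ i)]
                  simp [smul_eq_mul]
              _ ≤ ∑ j ∈ Finset.univ.erase i, d j :=
                  Finset.sum_le_sum fun j _ => hge j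
          calc (k + 1) * (p - 1) = 2 * (p - 1) + (k - 1) * (p - 1) := by
                have : k + 1 = 2 + (k - 1) := by omega
                rw [this, Nat.add_mul]
            _ ≤ d i + ∑ j ∈ Finset.univ.erase i, d j := Nat.add_le_add hdi h2
        omega
      rw [if_pos hdm]
      congr 1
      calc ∏ i, (if d i ≠ 0 ∧ (p - 1) ∣ d i then (-1 : ZMod p) else 0)
          = ∏ _i : Fin k, (-1 : ZMod p) := Finset.prod_congr rfl fun i _ => if_pos (h i)
        _ = (-1 : ZMod p) ^ k := by rw [Finset.prod_const, Finset.card_univ, Fintype.card_fin]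
    · obtain ⟨i, hi⟩ := not_forall.mp h
      have hne : d ≠ m0 := by
        rintro rfl
        exact hi ⟨by rw [hm0i]; omega, by rw [hm0i]⟩
      rw [if_neg hne]
      have hz : (∏ x : Fin k, if d x ≠ 0 ∧ p - 1 ∣ d x then (-1 : ZMod p) else 0) = 0 :=
        Finset.prod_eq_zero (Finset.mem_univ i) (if_neg hi)
      rw [hz, mul_zero]
  rw [Finset.sum_congr rfl key, Finset.sum_ite_eq' P.support m0
    (fun d => MvPolynomial.coeff d P * (-1 : ZMod p) ^ k)]
  by_cases hmem : m0 ∈ P.support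
  · rw [if_pos hmem, mul_comm]
  · rw [if_neg hmem, MvPolynomial.notMem_support_iff.mp hmem, mul_zero]
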